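/- Pointwise convergence of the forward averaging operator: Let d ∈ (0,1), f ∈ SD²_{d−1}(0+), f_δ(t,v) = f(t+δ,t+δ−δv)/f(t+δ,t), and let X : [0,∞) → ℝ be a càdlàg path bounded on compacts. Then for every t ∈ [0,1], lim_{δ↓0} | ∫₀¹ f_δ(t,v) X(t+δ(1−v)) dv − (1/d) X(t) | = 0. -/

import Mathlib

open MeasureTheory ProbabilityTheory Filter Set intervalIntegral Real

/-- `p01 F t r = ∂F/∂r (t,r)` -/
noncomputable def p01 (F : ℝ → ℝ → ℝ) (t r : ℝ) : ℝ := deriv (fun x => F t x) r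
/-- `p10 F t r = ∂F/∂t (t,r)` -/
noncomputable def p10 (F : ℝ → ℝ → ℝ) (t r : ℝ) : ℝ := deriv (fun x => F x r) t
/-- `p11 F t r = ∂²F/∂t∂r (t,r)` -/
noncomputable def p11 (F : ℝ → ℝ → ℝ) (t r : ℝ) : ℝ := deriv (fun x => p01 F x r) t
/-- `p02 F t r = ∂²F/∂r² (t,r)` -/
noncomputable def p02 (F : ℝ → ℝ → ℝ) (t r : ℝ) : ℝ := deriv (fun x => p01 F t x) r

/-- `lim_{h↓0} sup_{t∈K} |G h t + c| = 0` for every compact `K ⊂ ℝ`. -/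
def UnifDiagLimit (G : ℝ → ℝ → ℝ) (c : ℝ) : Prop :=
  ∀ K : Set ℝ, IsCompact K → ∀ ε > 0, ∃ h₀ > 0, ∀ h : ℝ, 0 < h → h < h₀ →
    ∀ t ∈ K, |G h t + c| < ε

/-- `F ∈ SR²_ρ(0+)` : a function of smooth variation of index `ρ` at the diagonal. -/
def SmoothVar (F : ℝ → ℝ → ℝ) (ρ : ℝ) : Prop :=
  ContinuousOn (fun p : ℝ × ℝ => F p.1 p.2) {p : ℝ × ℝ | p.2 ≤ p.1} ∧
  ContDiffOn ℝ 2 (fun p : ℝ × ℝ => F p.1 p.2) {p : ℝ × ℝ | p.2 < p.1} ∧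
  (∀ t r : ℝ, r < t → 0 < F t r) ∧
  UnifDiagLimit (fun h t => h * p01 F t (t - h) / F t (t - h)) ρ ∧
  UnifDiagLimit (fun h t => h * p10 F (t + h) t / F (t + h) t) (-ρ) ∧
  UnifDiagLimit (fun h t => h ^ 2 * p11 F t (t - h) / F t (t - h)) (ρ * (ρ - 1)) ∧
  UnifDiagLimit (fun h t => h ^ 2 * p02 F t (t - h) / F t (t - h)) (-(ρ * (ρ - 1)))

lemma measurable_of_rightCont {X : ℝ → ℝ}
    (hXrc : ∀ s : ℝ, Tendsto X (nhdsWithin s (Set.Ici s)) (nhds (X s))) :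
    Measurable X := by
  have happ : ∀ n : ℕ, Measurable fun u : ℝ => X ((⌈u * 2 ^ n⌉ : ℤ) / 2 ^ n) := by
    intro n
    have h1 : Measurable fun u : ℝ => (⌈u * 2 ^ n⌉ : ℤ) :=
      Int.measurable_ceil.comp (measurable_id.mul_const _)
    exact (measurable_of_countable (fun k : ℤ => X (k / 2 ^ n))).comp h1
  apply measurable_of_tendsto_metrizable happ
  rw [tendsto_pi_nhds]
  intro u
  have hpow : ∀ n : ℕ, (0:ℝ) < 2 ^ n := fun n => by positivity
  have hge : ∀ n : ℕ, u ≤ ((⌈u * 2 ^ n⌉ : ℤ) : ℝ) / 2 ^ n := fun n => by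
    rw [le_div_iff₀ (hpow n)]; exact Int.le_ceil _
  have hle : ∀ n : ℕ, ((⌈u * 2 ^ n⌉ : ℤ) : ℝ) / 2 ^ n ≤ u + (1/2) ^ n := fun n => by
    rw [div_le_iff₀ (hpow n)]
    have h1 : ((⌈u * 2 ^ n⌉ : ℤ) : ℝ) < u * 2 ^ n + 1 := Int.ceil_lt_add_one _
    have h2 : ((1:ℝ)/2) ^ n * 2 ^ n = 1 := by
      rw [← mul_pow]; norm_num
    nlinarith [hpow n]
  have hup : Tendsto (fun n : ℕ => u + ((1:ℝ)/2) ^ n) atTop (nhds (u + 0)) :=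
    tendsto_const_nhds.add (tendsto_pow_atTop_nhds_zero_of_lt_one (by norm_num) (by norm_num))
  rw [add_zero] at hup
  have hlim : Tendsto (fun n : ℕ => ((⌈u * 2 ^ n⌉ : ℤ) : ℝ) / 2 ^ n) atTop (nhds u) :=
    tendsto_of_tendsto_of_tendsto_of_le_of_le tendsto_const_nhds hup hge hle
  apply (hXrc u).comp
  rw [tendsto_nhdsWithin_iff]
  exact ⟨hlim, Filter.Eventually.of_forall fun n => hge n⟩

lemma hasDeriv_p01 {F : ℝ → ℝ → ℝ}
    (hsm : ContDiffOn ℝ 2 (fun p : ℝ × ℝ => F p.1 p.2) {p : ℝ × ℝ | p.2 < p.1})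
    {s r : ℝ} (h : r < s) : HasDerivAt (fun x => F s x) (p01 F s r) r := by
  have hU : IsOpen {p : ℝ × ℝ | p.2 < p.1} := isOpen_lt continuous_snd continuous_fst
  have hmem : (s, r) ∈ {p : ℝ × ℝ | p.2 < p.1} := h
  have hG : DifferentiableAt ℝ (fun p : ℝ × ℝ => F p.1 p.2) (s, r) :=
    (hsm.differentiableOn (by norm_num)).differentiableAt (hU.mem_nhds hmem)
  have h2 : DifferentiableAt ℝ (fun x : ℝ => (s, x)) r :=
    (differentiableAt_const s).prodMk differentiableAt_id
  have h3 : DifferentiableAt ℝ (fun x => F s x) r := hG.comp r h2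
  simpa [p01] using h3.hasDerivAt

lemma Fdiag_eq_zero {F : ℝ → ℝ → ℝ} {d : ℝ} (hd : 0 < d)
    (hcont : ContinuousOn (fun p : ℝ × ℝ => F p.1 p.2) {p : ℝ × ℝ | p.2 ≤ p.1})
    (hsm : ContDiffOn ℝ 2 (fun p : ℝ × ℝ => F p.1 p.2) {p : ℝ × ℝ | p.2 < p.1})
    (hpos : ∀ t r : ℝ, r < t → 0 < F t r)
    (h01 : UnifDiagLimit (fun h t => h * p01 F t (t - h) / F t (t - h)) d)
    (s : ℝ) : F s s = 0 := by
  obtain ⟨h₀, h₀pos, hh⟩ := h01 {s} isCompact_singleton (d / 2) (half_pos hd)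
  set g : ℝ → ℝ := fun h => F s (s - h) with hg
  have hgpos : ∀ h : ℝ, 0 < h → 0 < g h := fun h hp => hpos s (s - h) (by linarith)
  -- derivative of g
  have hgd : ∀ x : ℝ, 0 < x → HasDerivAt g (-(p01 F s (s - x))) x := by
    intro x hx
    have h1 : HasDerivAt (fun h : ℝ => s - h) (-1) x := by
      simpa using (hasDerivAt_id x).const_sub s
    have h2 := (hasDeriv_p01 hsm (show s - x < s by linarith)).comp x h1
    rw [show -(p01 F s (s - x)) = p01 F s (s - x) * (-1) by ring]; exact h2
  -- monotone auxiliary function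
  set φ : ℝ → ℝ := fun h => Real.log (g h) - d / 2 * Real.log h with hφ
  have hφd : ∀ x ∈ Ioo (0:ℝ) h₀, HasDerivAt φ
      (-(p01 F s (s - x)) / g x - d / 2 * x⁻¹) x := by
    intro x hx
    exact ((hgd x hx.1).log (ne_of_gt (hgpos x hx.1))).sub
      ((Real.hasDerivAt_log (ne_of_gt hx.1)).const_mul (d / 2))
  have hφmono : MonotoneOn φ (Ioo (0:ℝ) h₀) := by
    apply monotoneOn_of_deriv_nonneg (convex_Ioo _ _)
    · exact fun x hx => ((hφd x hx).continuousAt).continuousWithinAt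
    · intro x hx
      rw [interior_Ioo] at hx
      exact ((hφd x hx).differentiableAt).differentiableWithinAt
    · intro x hx
      rw [interior_Ioo] at hx
      rw [(hφd x hx).deriv]
      have hr := hh x hx.1 hx.2 s rfl
      have hFp := hgpos x hx.1
      have h3 : x * p01 F s (s - x) / F s (s - x) < -(d / 2) := by
        have := abs_lt.mp hr
        linarith [this.2]
      have h4 : x * p01 F s (s - x) < -(d / 2) * F s (s - x) := by
        rw [div_lt_iff₀ hFp] at h3
        exact h3
      have hgx : g x = F s (s - x) := rfl
      have h5 : d / 2 * x⁻¹ ≤ -p01 F s (s - x) / g x := by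
        rw [← div_eq_mul_inv, div_le_div_iff₀ hx.1 hFp, hgx]
        nlinarith [h4]
      linarith
  -- comparison inequality
  set b : ℝ := h₀ / 2 with hbdef
  have hb : b ∈ Ioo (0:ℝ) h₀ := ⟨by rw [hbdef]; positivity, by rw [hbdef]; linarith⟩
  have key : ∀ a ∈ Ioo (0:ℝ) b, g a ≤ g b * (a / b) ^ (d / 2) := by
    intro a ha
    have h1 : φ a ≤ φ b := hφmono ⟨ha.1, lt_trans ha.2 hb.2⟩ hb (le_of_lt ha.2)
    have hga := hgpos a ha.1
    have hgb := hgpos b hb.1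
    have h2 : Real.log (g b * (a / b) ^ (d / 2))
        = Real.log (g b) + d / 2 * (Real.log a - Real.log b) := by
      rw [Real.log_mul (ne_of_gt hgb)
          (ne_of_gt (Real.rpow_pos_of_pos (div_pos ha.1 hb.1) _)),
        Real.log_rpow (div_pos ha.1 hb.1),
        Real.log_div (ne_of_gt ha.1) (ne_of_gt hb.1)]
    have h3 : Real.log (g a) ≤ Real.log (g b * (a / b) ^ (d / 2)) := by
      rw [h2]; simp only [hφ] at h1; linarith
    exact (Real.log_le_log_iff hga (mul_pos hgb (Real.rpow_pos_of_pos (div_pos ha.1 hb.1) _))).mp h3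
  -- two limits of g at 0+
  have hlim1 : Tendsto g (nhdsWithin 0 (Ioi 0)) (nhds (F s s)) := by
    have hc : ContinuousWithinAt (fun p : ℝ × ℝ => F p.1 p.2) {p : ℝ × ℝ | p.2 ≤ p.1} (s, s) :=
      hcont (s, s) (le_refl s)
    have hmap : Tendsto (fun a : ℝ => ((s, s - a) : ℝ × ℝ)) (nhdsWithin 0 (Ioi 0))
        (nhdsWithin (s, s) {p : ℝ × ℝ | p.2 ≤ p.1}) := by
      apply tendsto_nhdsWithin_of_tendsto_nhds_of_eventually_within
      · have hco : Continuous (fun a : ℝ => ((s, s - a) : ℝ × ℝ)) := by continuity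
        have h5 := (hco.tendsto 0).mono_left (nhdsWithin_le_nhds (s := Ioi 0))
        rw [show ((s, s - (0:ℝ)) : ℝ × ℝ) = (s, s) by rw [sub_zero]] at h5
        exact h5
      · filter_upwards [self_mem_nhdsWithin] with a ha
        show s - a ≤ s
        linarith [mem_Ioi.mp ha]
    exact hc.tendsto.comp hmap
  have hlim2 : Tendsto g (nhdsWithin 0 (Ioi 0)) (nhds 0) := by
    have h1 : Tendsto (fun a : ℝ => a / b) (nhdsWithin 0 (Ioi 0)) (nhds 0) := by
      have h := (continuous_id.div_const b).tendsto 0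
      simp only [id_eq, zero_div] at h
      exact h.mono_left nhdsWithin_le_nhds
    have h2 : ContinuousAt (fun x : ℝ => x ^ (d / 2)) 0 :=
      Real.continuousAt_rpow_const 0 (d / 2) (Or.inr (by positivity))
    have h3 := h2.tendsto.comp h1
    rw [Real.zero_rpow (ne_of_gt (by positivity : (0:ℝ) < d / 2))] at h3
    have hbt : Tendsto (fun a : ℝ => g b * (a / b) ^ (d / 2)) (nhdsWithin 0 (Ioi 0)) (nhds 0) := by
      have := h3.const_mul (g b)
      simpa using this
    apply tendsto_of_tendsto_of_tendsto_of_le_of_le' tendsto_const_nhds hbt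
    · filter_upwards [self_mem_nhdsWithin] with a ha
      exact (hgpos a (mem_Ioi.mp ha)).le
    · filter_upwards [Ioo_mem_nhdsGT_of_mem (⟨le_refl 0, hb.1⟩ : (0:ℝ) ∈ Ico (0:ℝ) b)] with a ha
      exact key a ha
  exact tendsto_nhds_unique hlim1 hlim2

lemma integral_p01_eq {F : ℝ → ℝ → ℝ}
    (hcont : ContinuousOn (fun p : ℝ × ℝ => F p.1 p.2) {p : ℝ × ℝ | p.2 ≤ p.1})
    (hsm : ContDiffOn ℝ 2 (fun p : ℝ × ℝ => F p.1 p.2) {p : ℝ × ℝ | p.2 < p.1})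
    {a b : ℝ} (hab : a < b) (hFbb : F b b = 0)
    (hsign : ∀ u ∈ Ioo a b, p01 F b u ≤ 0) :
    IntervalIntegrable (fun u => p01 F b u) volume a b ∧
      (∫ u in a..b, p01 F b u) = - F b a := by
  have hcg : ContinuousOn (fun u => F b u) (Icc a b) := by
    have hmap : MapsTo (fun u : ℝ => ((b, u) : ℝ × ℝ)) (Icc a b) {p : ℝ × ℝ | p.2 ≤ p.1} :=
      fun u hu => hu.2
    exact hcont.comp ((continuous_const.prodMk continuous_id).continuousOn) hmap
  have hderiv : ∀ u ∈ Ioo a b, HasDerivAt (fun x => F b x) (p01 F b u) u :=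
    fun u hu => hasDeriv_p01 hsm hu.2
  have hint1 : IntegrableOn (fun u => -(p01 F b u)) (Ioc a b) :=
    integrableOn_deriv_of_nonneg (g := fun u => -(F b u)) hcg.neg
      (fun u hu => (hderiv u hu).neg) (fun u hu => by simpa using hsign u hu)
  have hii : IntervalIntegrable (fun u => p01 F b u) volume a b := by
    have h2 := ((intervalIntegrable_iff_integrableOn_Ioc_of_le hab.le).mpr hint1).neg
    have h3 : (fun u => p01 F b u) = -fun u => -p01 F b u := by funext u; simp
    rw [h3]; exact h2
  refine ⟨hii, ?_⟩
  rw [intervalIntegral.integral_eq_sub_of_hasDeriv_right_of_le hab.le hcg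
      (fun u hu => (hderiv u hu).hasDerivWithinAt) hii, hFbb]
  ring

set_option maxHeartbeats 1000000 in
/-- Proposition 2, pathwise: for a càdlàg path `X` bounded on
compacts, `lim_{δ↓0} |∫₀¹ f_δ(t,v) X(t+δ(1−v)) dv − (1/d) X(t)| = 0`
for every `t ∈ [0,1]`. -/
theorem proposition2 (d : ℝ) (hd : d ∈ Set.Ioo (0:ℝ) 1)
    (F : ℝ → ℝ → ℝ) (hF : SmoothVar F d)
    (f : ℝ → ℝ → ℝ) (hf : ∀ t r : ℝ, f t r = p01 F t r)
    (X : ℝ → ℝ)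
    (hXrc : ∀ s : ℝ, Tendsto X (nhdsWithin s (Set.Ici s)) (nhds (X s)))
    (hXll : ∀ s : ℝ, ∃ l : ℝ, Tendsto X (nhdsWithin s (Set.Iio s)) (nhds l))
    (hXbdd : ∀ T > (0:ℝ), ∃ C : ℝ, ∀ s ∈ Set.Icc (-T) T, |X s| ≤ C) :
    ∀ t ∈ Set.Icc (0:ℝ) 1, ∀ ε > (0:ℝ), ∃ δ₀ > (0:ℝ), ∀ δ : ℝ, 0 < δ → δ < δ₀ →
      |(∫ v in (0:ℝ)..1,
          (f (t + δ) (t + δ - δ * v) / f (t + δ) t) * X (t + δ * (1 - v)))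
        - (1 / d) * X t| < ε := by
  obtain ⟨hd0, hd1⟩ := hd
  obtain ⟨hcont, hsm, hpos, h01, -, -, -⟩ := hF
  have hXm : Measurable X := measurable_of_rightCont hXrc
  intro t ht ε hε
  obtain ⟨C, hC⟩ := hXbdd 2 (by norm_num)
  have hC0 : 0 ≤ C := le_trans (abs_nonneg _) (hC 0 (by norm_num))
  set ε₂ : ℝ := ε * d / 4 with hε₂def
  have hε₂ : 0 < ε₂ := by rw [hε₂def]; positivity
  set ε₄ : ℝ := min (d / 2) (ε * d ^ 2 / (8 * (C + 1))) with hε₄def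
  have hε₄ : 0 < ε₄ := by rw [hε₄def]; exact lt_min (by positivity) (by positivity)
  have hε₄d : ε₄ ≤ d / 2 := min_le_left _ _
  have hε₄e : ε₄ ≤ ε * d ^ 2 / (8 * (C + 1)) := min_le_right _ _
  obtain ⟨r, hr0, hrc⟩ := Metric.tendsto_nhdsWithin_nhds.mp (hXrc t) ε₂ hε₂
  obtain ⟨h₁, h₁0, hsg⟩ := h01 (Icc 0 2) isCompact_Icc (d / 2) (half_pos hd0)
  obtain ⟨h₂, h₂0, hrt⟩ := h01 (Icc 0 2) isCompact_Icc ε₄ hε₄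
  refine ⟨min (min h₁ h₂) (min r 1),
    lt_min (lt_min h₁0 h₂0) (lt_min hr0 one_pos), ?_⟩
  intro δ hδ0 hδlt
  have hδ1 : δ < h₁ := lt_of_lt_of_le hδlt ((min_le_left _ _).trans (min_le_left _ _))
  have hδ2 : δ < h₂ := lt_of_lt_of_le hδlt ((min_le_left _ _).trans (min_le_right _ _))
  have hδr : δ < r := lt_of_lt_of_le hδlt ((min_le_right _ _).trans (min_le_left _ _))
  have hδone : δ < 1 := lt_of_lt_of_le hδlt ((min_le_right _ _).trans (min_le_right _ _))
  set s : ℝ := t + δ with hsdef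
  have hts : t < s := by rw [hsdef]; linarith
  have hsmem : s ∈ Icc (0:ℝ) 2 := ⟨by rw [hsdef]; linarith [ht.1], by rw [hsdef]; linarith [ht.2]⟩
  -- sign of p01 near the diagonal
  have hNeg : ∀ u ∈ Ioo t s, p01 F s u < 0 := by
    intro u hu
    have hh : 0 < s - u := by linarith [hu.2]
    have hh1 : s - u < h₁ := by
      have : s - u < s - t := by linarith [hu.1]
      rw [hsdef] at this ⊢; linarith
    have hr1 : |(s - u) * p01 F s (s - (s - u)) / F s (s - (s - u)) + d| < d / 2 :=
      hsg (s - u) hh hh1 s hsmem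
    rw [show s - (s - u) = u by ring] at hr1
    have hF1 : 0 < F s u := hpos s u hu.2
    have h3 : (s - u) * p01 F s u / F s u < -(d / 2) := by
      have := (abs_lt.mp hr1).2; linarith
    rw [div_lt_iff₀ hF1] at h3
    nlinarith
  have hD : p01 F s t < 0 := by
    have hr1 : |δ * p01 F s (s - δ) / F s (s - δ) + d| < d / 2 := hsg δ hδ0 hδ1 s hsmem
    rw [show s - δ = t by rw [hsdef]; ring] at hr1
    have hF1 : 0 < F s t := hpos s t hts
    have h3 : δ * p01 F s t / F s t < -(d / 2) := by
      have := (abs_lt.mp hr1).2; linarith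
    rw [div_lt_iff₀ hF1] at h3
    nlinarith
  have hA : 0 < F s t := hpos s t hts
  set D : ℝ := p01 F s t with hDdef
  have hDne : D ≠ 0 := ne_of_lt hD
  have hδD : δ * D ≠ 0 := mul_ne_zero (ne_of_gt hδ0) hDne
  -- ratio bound
  set R : ℝ := δ * D / F s t with hRdef
  have hRb : |R + d| < ε₄ := by
    have hr1 : |δ * p01 F s (s - δ) / F s (s - δ) + d| < ε₄ := hrt δ hδ0 hδ2 s hsmem
    rw [show s - δ = t by rw [hsdef]; ring] at hr1
    exact hr1
  have hRneg : R ≤ -(d / 2) := by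
    have := (abs_lt.mp hRb).2; linarith
  have hRne : R ≠ 0 := by intro h; rw [h] at hRneg; linarith
  have hnegR : 0 < -R := by linarith
  -- diagonal value and FTC
  have hFss : F s s = 0 := Fdiag_eq_zero hd0 hcont hsm hpos h01 s
  obtain ⟨hInt, hVal⟩ := integral_p01_eq hcont hsm hts hFss (fun u hu => (hNeg u hu).le)
  have hIntIoc : IntegrableOn (fun u => p01 F s u) (Ioc t s) :=
    (intervalIntegrable_iff_integrableOn_Ioc_of_le hts.le).mp hInt
  -- integrability of p01 * X
  have hmeas : Measurable fun u => p01 F s u * X u :=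
    (measurable_deriv (fun x => F s x)).mul hXm
  have hsub2 : Ioc t s ⊆ Icc (-2:ℝ) 2 := by
    intro u hu
    constructor
    · have := hu.1; have := ht.1; linarith
    · have := hu.2; have := hsmem.2; linarith
  have hIntXIoc : IntegrableOn (fun u => p01 F s u * X u) (Ioc t s) := by
    apply Integrable.mono' (hIntIoc.abs.const_mul C) hmeas.aestronglyMeasurable
    filter_upwards [ae_restrict_mem measurableSet_Ioc] with u hu
    rw [Real.norm_eq_abs, abs_mul]
    calc |p01 F s u| * |X u| ≤ |p01 F s u| * C :=
          mul_le_mul_of_nonneg_left (hC u (hsub2 hu)) (abs_nonneg _)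
      _ = C * |p01 F s u| := mul_comm _ _
  have hIntX : IntervalIntegrable (fun u => p01 F s u * X u) volume t s :=
    (intervalIntegrable_iff_integrableOn_Ioc_of_le hts.le).mpr hIntXIoc
  -- change of variables
  set I2 : ℝ := ∫ u in t..s, p01 F s u * X u with hI2def
  have hCoV : (∫ v in (0:ℝ)..1, (f (t + δ) (t + δ - δ * v) / f (t + δ) t) * X (t + δ * (1 - v)))
      = I2 / (δ * D) := by
    have h1 : EqOn (fun v => (f (t + δ) (t + δ - δ * v) / f (t + δ) t) * X (t + δ * (1 - v)))
        (fun v => (fun u => p01 F s u * X u / D) (-δ * v + s)) (uIcc (0:ℝ) 1) := by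
      intro v _
      simp only [hf]
      have e1 : t + δ - δ * v = -δ * v + s := by rw [hsdef]; ring
      have e2 : t + δ * (1 - v) = -δ * v + s := by rw [hsdef]; ring
      rw [e1, e2, hDdef]
      ring
    rw [intervalIntegral.integral_congr h1,
      intervalIntegral.integral_comp_mul_add (fun u => p01 F s u * X u / D)
        (neg_ne_zero.mpr (ne_of_gt hδ0)) s,
      show -δ * 0 + s = s by ring, show -δ * 1 + s = t by rw [hsdef]; ring,
      intervalIntegral.integral_symm, intervalIntegral.integral_div, smul_eq_mul, hI2def]
    field_simp
  set E : ℝ := ∫ u in t..s, p01 F s u * (X u - X t) with hEdef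
  have hsplit : E = I2 + F s t * X t := by
    have h2 : E = ∫ u in t..s, (p01 F s u * X u - p01 F s u * X t) := by
      rw [hEdef]; apply intervalIntegral.integral_congr; intro u _; ring
    rw [h2, intervalIntegral.integral_sub hIntX (hInt.mul_const (X t)),
      intervalIntegral.integral_mul_const, hVal, hI2def]
    ring
  -- bound on E
  have hEbound : |E| ≤ ε₂ * F s t := by
    have hIooX : IntegrableOn (fun u => p01 F s u * (X u - X t)) (Ioo t s) := by
      have h3 : IntegrableOn (fun u => p01 F s u * X u - p01 F s u * X t) (Ioc t s) :=
        hIntXIoc.sub (hIntIoc.mul_const (X t))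
      exact (h3.mono_set Ioo_subset_Ioc_self).congr (ae_of_all _ fun u => by ring)
    have hIooP : IntegrableOn (fun u => ε₂ * -p01 F s u) (Ioo t s) := by
      have h3 : IntegrableOn (fun u => ε₂ * -p01 F s u) (Ioc t s) := hIntIoc.neg.const_mul ε₂
      exact h3.mono_set Ioo_subset_Ioc_self
    have hXdiff : ∀ u ∈ Ioo t s, |X u - X t| ≤ ε₂ := by
      intro u hu
      have hdist : dist u t < r := by
        rw [Real.dist_eq, abs_of_nonneg (by linarith [hu.1] : (0:ℝ) ≤ u - t)]
        have := hu.2; rw [hsdef] at this; linarith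
      have := hrc (le_of_lt hu.1) hdist
      rw [Real.dist_eq] at this
      exact this.le
    have h3 : ‖∫ u in Ioo t s, p01 F s u * (X u - X t)‖
        ≤ ∫ u in Ioo t s, ε₂ * -p01 F s u := by
      apply MeasureTheory.norm_integral_le_of_norm_le hIooP
      filter_upwards [ae_restrict_mem measurableSet_Ioo] with u hu
      rw [Real.norm_eq_abs, abs_mul, abs_of_neg (hNeg u hu)]
      calc -p01 F s u * |X u - X t| ≤ -p01 F s u * ε₂ :=
            mul_le_mul_of_nonneg_left (hXdiff u hu) (by linarith [hNeg u hu])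
        _ = ε₂ * -p01 F s u := mul_comm _ _
    have h4 : E = ∫ u in Ioo t s, p01 F s u * (X u - X t) := by
      rw [hEdef, intervalIntegral.integral_of_le hts.le, integral_Ioc_eq_integral_Ioo]
    have h5 : (∫ u in Ioo t s, ε₂ * -p01 F s u) = ε₂ * F s t := by
      rw [← integral_Ioc_eq_integral_Ioo, ← intervalIntegral.integral_of_le hts.le]
      have h6 : (∫ u in t..s, ε₂ * -p01 F s u) = ε₂ * ∫ u in t..s, -p01 F s u :=
        intervalIntegral.integral_const_mul _ _
      rw [h6, intervalIntegral.integral_neg, hVal]; ring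
    rw [h4, ← Real.norm_eq_abs]
    exact h3.trans (le_of_eq h5)
  -- main decomposition
  have hmain : (∫ v in (0:ℝ)..1, (f (t + δ) (t + δ - δ * v) / f (t + δ) t) * X (t + δ * (1 - v)))
      - 1 / d * X t = E / (δ * D) + X t * (-(1 / R) - 1 / d) := by
    rw [hCoV, show I2 = E - F s t * X t by linear_combination -hsplit, hRdef]
    field_simp
    ring
  rw [hmain]
  -- bound the two terms
  have hposneg : 0 < -(δ * D) := by nlinarith
  have hR2 : 1 / -R ≤ 2 / d := by
    have h10 := one_div_le_one_div_of_le (half_pos hd0) (by linarith : d / 2 ≤ -R)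
    rwa [one_div_div] at h10
  have hterm1 : |E / (δ * D)| ≤ ε₂ * (2 / d) := by
    rw [abs_div, abs_of_neg (mul_neg_of_pos_of_neg hδ0 hD)]
    have h8 : |E| / -(δ * D) ≤ ε₂ * F s t / -(δ * D) := by gcongr
    have h9 : ε₂ * F s t / -(δ * D) = ε₂ * (1 / -R) := by
      rw [hRdef]; field_simp
    calc |E| / -(δ * D) ≤ ε₂ * F s t / -(δ * D) := h8
      _ = ε₂ * (1 / -R) := h9
      _ ≤ ε₂ * (2 / d) := mul_le_mul_of_nonneg_left hR2 hε₂.le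
  have habs1 : |X t| ≤ C := hC t (by constructor <;> linarith [ht.1, ht.2])
  have hterm2 : |(-(1 / R) - 1 / d)| ≤ ε₄ / (d / 2 * d) := by
    have h7 : -(1 / R) - 1 / d = (R + d) / (-R * d) := by
      field_simp
      ring
    rw [h7, abs_div, abs_of_pos (mul_pos hnegR hd0)]
    apply div_le_div₀ hε₄.le hRb.le (by positivity)
    nlinarith
  calc |E / (δ * D) + X t * (-(1 / R) - 1 / d)|
      ≤ |E / (δ * D)| + |X t * (-(1 / R) - 1 / d)| := abs_add_le _ _
    _ ≤ ε₂ * (2 / d) + C * (ε₄ / (d / 2 * d)) := by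
        apply add_le_add hterm1
        rw [abs_mul]
        exact mul_le_mul habs1 hterm2 (abs_nonneg _) hC0
    _ < ε := by
        have e1 : ε₂ * (2 / d) = ε / 2 := by
          rw [hε₂def]; field_simp; ring
        have e2 : ε₄ / (d / 2 * d) ≤ (ε * d ^ 2 / (8 * (C + 1))) / (d / 2 * d) := by gcongr
        have hC1 : C + 1 ≠ 0 := by positivity
        have e3 : (ε * d ^ 2 / (8 * (C + 1))) / (d / 2 * d) = ε / (4 * (C + 1)) := by
          field_simp
          ring
        have e4 : C * (ε₄ / (d / 2 * d)) ≤ C * (ε / (4 * (C + 1))) :=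
          mul_le_mul_of_nonneg_left (e2.trans (le_of_eq e3)) hC0
        have h10 : C / (C + 1) < 1 := by
          rw [div_lt_one (by linarith)]; linarith
        have e5 : C * (ε / (4 * (C + 1))) < ε / 2 := by
          calc C * (ε / (4 * (C + 1))) = (C / (C + 1)) * (ε / 4) := by
                rw [div_mul_div_comm, mul_comm (4:ℝ) (C+1), mul_div_assoc]
            _ < 1 * (ε / 4) := mul_lt_mul_of_pos_right h10 (by positivity)
            _ ≤ ε / 2 := by linarith
        linarith
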